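/- Let D be a PID and let B_i, C_i be matrices over D[x] such that A = B₁C₁ and C_iB_i = B_{i+1}C_{i+1} are full rank (full column rank / full row rank) factorizations for all i. If C_l·B_l is nonsingular, then rank(A^{l+1}) = rank(A^l) = rank(C_l B_l). -/

import Mathlib

open Matrix

section RankMap

variable {R : Type*} [CommRing R] [IsDomain R]

/-- The coordinatewise localization map `(n → R) →ₗ[R] (n → Frac R)`. -/
noncomputable def piLoc (R : Type*) [CommRing R] [IsDomain R] (n : Type*) :
    (n → R) →ₗ[R] (n → FractionRing R) :=
  LinearMap.pi fun i => (Algebra.linearMap R (FractionRing R)).comp (LinearMap.proj i)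

@[simp] lemma piLoc_apply (n : Type*) (v : n → R) (i : n) :
    piLoc R n v i = algebraMap R (FractionRing R) (v i) := rfl

instance piLoc_isLocalizedModule (n : Type*) [Fintype n] :
    IsLocalizedModule (nonZeroDivisors R) (piLoc R n) := by
  have hinj : Function.Injective (algebraMap R (FractionRing R)) :=
    IsFractionRing.injective R (FractionRing R)
  constructor
  · intro s
    have hs : algebraMap R (FractionRing R) s ≠ 0 := by
      intro h
      exact nonZeroDivisors.coe_ne_zero s (hinj (by simp [h]))
    rw [Module.End.isUnit_iff]
    constructor
    · intro x y h
      funext i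
      have h1 := congrFun h i
      simp only [Module.algebraMap_end_apply, Pi.smul_apply, Algebra.smul_def] at h1
      exact mul_left_cancel₀ hs h1
    · intro y
      refine ⟨fun i => (algebraMap R (FractionRing R) s)⁻¹ * y i, ?_⟩
      funext i
      simp only [Module.algebraMap_end_apply, Pi.smul_apply, Algebra.smul_def]
      field_simp
  · intro y
    obtain ⟨b, hb⟩ :=
      IsLocalization.exist_integer_multiples_of_finite (nonZeroDivisors R) y
    choose x hx using hb
    refine ⟨(x, b), ?_⟩
    funext i
    simpa [Submonoid.smul_def] using (hx i).symm
  · intro x y h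
    refine ⟨1, ?_⟩
    simp only [one_smul]
    funext i
    exact hinj (congrFun h i)

lemma Matrix.rank_map_fractionRing {a b : Type*} [Fintype a] [Fintype b]
    (M : Matrix a b R) :
    (M.map (algebraMap R (FractionRing R))).rank = M.rank := by
  classical
  rw [Matrix.rank_eq_finrank_span_cols, Matrix.rank_eq_finrank_span_cols]
  have hcols : Set.range (M.map (algebraMap R (FractionRing R))).col
      = piLoc R a '' Set.range M.col := by
    rw [← Set.range_comp]
    rfl
  rw [hcols, ← Submodule.localized'_span (FractionRing R) (nonZeroDivisors R) (piLoc R a)]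
  have := (IsLocalizedModule.isBaseChange (nonZeroDivisors R) (FractionRing R)
    ((Submodule.span R (Set.range M.col)).toLocalized' (FractionRing R)
      (nonZeroDivisors R) (piLoc R a))).rank_eq
  unfold Module.finrank
  rw [this]

end RankMap

section FieldRank

variable {K : Type*} [Field K]

lemma mulVecLin_injective_of_rank' {a b : ℕ} (M : Matrix (Fin a) (Fin b) K)
    (h : M.rank = b) : Function.Injective M.mulVecLin := by
  rw [← LinearMap.ker_eq_bot]
  have h2 := LinearMap.finrank_range_add_finrank_ker M.mulVecLin
  rw [← Matrix.rank, h, Module.finrank_pi, Fintype.card_fin] at h2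
  have h3 : Module.finrank K (LinearMap.ker M.mulVecLin) = 0 := by omega
  exact Submodule.finrank_eq_zero.mp h3

lemma mulVecLin_surjective_of_rank' {a b : ℕ} (M : Matrix (Fin a) (Fin b) K)
    (h : M.rank = a) : Function.Surjective M.mulVecLin := by
  rw [← LinearMap.range_eq_top]
  apply Submodule.eq_top_of_finrank_eq
  rw [← Matrix.rank, h, Module.finrank_pi, Fintype.card_fin]

lemma rank_of_mulVecLin_surjective {a b : ℕ} (M : Matrix (Fin a) (Fin b) K)
    (h : Function.Surjective M.mulVecLin) : M.rank = a := by
  rw [Matrix.rank, LinearMap.range_eq_top.mpr h, finrank_top, Module.finrank_pi,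
    Fintype.card_fin]

lemma rank_mul_of_injective {a b c : ℕ} (M : Matrix (Fin a) (Fin b) K)
    (N : Matrix (Fin b) (Fin c) K)
    (h : Function.Injective M.mulVecLin) : (M * N).rank = N.rank := by
  rw [Matrix.rank, Matrix.rank, Matrix.mulVecLin_mul, LinearMap.range_comp]
  exact ((Submodule.equivMapOfInjective _ h _).symm.finrank_eq)

end FieldRank

section Chain

variable {K : Type*} [Field K] (m : ℕ → ℕ)

/-- Partial product `B 0 * B 1 * ⋯ * B (j-1)`. -/
noncomputable def BP (B : ∀ i : ℕ, Matrix (Fin (m i)) (Fin (m (i + 1))) K) :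
    ∀ j : ℕ, Matrix (Fin (m 0)) (Fin (m j)) K
  | 0 => 1
  | (j + 1) => BP B j * B j

/-- Partial product `C (j-1) * ⋯ * C 1 * C 0`. -/
noncomputable def CP (C : ∀ i : ℕ, Matrix (Fin (m (i + 1))) (Fin (m i)) K) :
    ∀ j : ℕ, Matrix (Fin (m j)) (Fin (m 0)) K
  | 0 => 1
  | (j + 1) => C j * CP C j

variable (B : ∀ i : ℕ, Matrix (Fin (m i)) (Fin (m (i + 1))) K)
variable (C : ∀ i : ℕ, Matrix (Fin (m (i + 1))) (Fin (m i)) K)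

lemma CP_push (hchain : ∀ i, C i * B i = B (i + 1) * C (i + 1)) :
    ∀ j, CP m C j * (B 0 * C 0) = B j * C j * CP m C j
  | 0 => by simp [CP]
  | (j + 1) => by
    calc CP m C (j + 1) * (B 0 * C 0) = C j * (CP m C j * (B 0 * C 0)) := by
          rw [CP, Matrix.mul_assoc]
      _ = C j * (B j * C j * CP m C j) := by rw [CP_push hchain j]
      _ = (C j * B j) * (C j * CP m C j) := by
          rw [← Matrix.mul_assoc, ← Matrix.mul_assoc, Matrix.mul_assoc (C j * B j)]
      _ = B (j + 1) * C (j + 1) * CP m C (j + 1) := by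
          rw [hchain j, CP, Matrix.mul_assoc]

lemma pow_eq_BP_CP (A : Matrix (Fin (m 0)) (Fin (m 0)) K)
    (hA : A = B 0 * C 0) (hchain : ∀ i, C i * B i = B (i + 1) * C (i + 1)) :
    ∀ j, A ^ j = BP m B j * CP m C j
  | 0 => by simp [BP, CP]
  | (j + 1) => by
    calc A ^ (j + 1) = (BP m B j * CP m C j) * (B 0 * C 0) := by
          rw [pow_succ, pow_eq_BP_CP A hA hchain j, hA]
      _ = BP m B j * (CP m C j * (B 0 * C 0)) := by rw [Matrix.mul_assoc]
      _ = BP m B j * (B j * (C j * CP m C j)) := by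
          rw [CP_push m B C hchain j, Matrix.mul_assoc]
      _ = BP m B (j + 1) * CP m C (j + 1) := by
          rw [BP, CP, Matrix.mul_assoc]

lemma BP_inj (hB : ∀ i, (B i).rank = m (i + 1)) :
    ∀ j, Function.Injective (BP m B j).mulVecLin
  | 0 => by
    rw [BP, Matrix.mulVecLin_one]
    exact fun x y h => h
  | (j + 1) => by
    rw [BP, Matrix.mulVecLin_mul]
    exact (BP_inj hB j).comp (mulVecLin_injective_of_rank' (B j) (hB j))

lemma CP_surj (hC : ∀ i, (C i).rank = m (i + 1)) :
    ∀ j, Function.Surjective (CP m C j).mulVecLin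
  | 0 => by
    rw [CP, Matrix.mulVecLin_one]
    exact fun x => ⟨x, rfl⟩
  | (j + 1) => by
    rw [CP, Matrix.mulVecLin_mul]
    exact (mulVecLin_surjective_of_rank' (C j) (hC j)).comp (CP_surj hC j)

lemma rank_pow_eq (A : Matrix (Fin (m 0)) (Fin (m 0)) K)
    (hA : A = B 0 * C 0) (hchain : ∀ i, C i * B i = B (i + 1) * C (i + 1))
    (hB : ∀ i, (B i).rank = m (i + 1)) (hC : ∀ i, (C i).rank = m (i + 1))
    (j : ℕ) : (A ^ j).rank = m j := by
  rw [pow_eq_BP_CP m B C A hA hchain j,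
    rank_mul_of_injective _ _ (BP_inj m B hB j),
    rank_of_mulVecLin_surjective _ (CP_surj m C hC j)]

end Chain

theorem main_chain {R : Type*} [CommRing R] [IsDomain R] (m : ℕ → ℕ)
    (A : Matrix (Fin (m 0)) (Fin (m 0)) R)
    (B : ∀ i : ℕ, Matrix (Fin (m i)) (Fin (m (i + 1))) R)
    (C : ∀ i : ℕ, Matrix (Fin (m (i + 1))) (Fin (m i)) R)
    (hA : A = B 0 * C 0)
    (hchain : ∀ i, C i * B i = B (i + 1) * C (i + 1))
    (hBrank : ∀ i, (B i).rank = m (i + 1))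
    (hCrank : ∀ i, (C i).rank = m (i + 1))
    (k : ℕ) (hns : (C k * B k).det ≠ 0) :
    (A ^ (k + 2)).rank = (A ^ (k + 1)).rank ∧
    (A ^ (k + 1)).rank = (C k * B k).rank := by
  classical
  have hφinj : Function.Injective (algebraMap R (FractionRing R)) :=
    IsFractionRing.injective R (FractionRing R)
  have hA' : A.map (algebraMap R (FractionRing R))
      = (B 0).map (algebraMap R (FractionRing R))
        * (C 0).map (algebraMap R (FractionRing R)) := by
    rw [hA, Matrix.map_mul (f := algebraMap R (FractionRing R))]
  have hchain' : ∀ i, (C i).map (algebraMap R (FractionRing R))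
      * (B i).map (algebraMap R (FractionRing R))
      = (B (i + 1)).map (algebraMap R (FractionRing R))
        * (C (i + 1)).map (algebraMap R (FractionRing R)) := fun i => by
    rw [← Matrix.map_mul (f := algebraMap R (FractionRing R)), hchain i,
      Matrix.map_mul (f := algebraMap R (FractionRing R))]
  have hB' : ∀ i, ((B i).map (algebraMap R (FractionRing R))).rank = m (i + 1) := fun i => by
    rw [Matrix.rank_map_fractionRing]; exact hBrank i
  have hC' : ∀ i, ((C i).map (algebraMap R (FractionRing R))).rank = m (i + 1) := fun i => by
    rw [Matrix.rank_map_fractionRing]; exact hCrank i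
  have hns' : ((C k).map (algebraMap R (FractionRing R))
      * (B k).map (algebraMap R (FractionRing R))).det ≠ 0 := by
    have hdet := (algebraMap R (FractionRing R)).map_det (C k * B k)
    rw [RingHom.mapMatrix_apply] at hdet
    rw [← Matrix.map_mul (f := algebraMap R (FractionRing R)), ← hdet]
    intro h
    exact hns (hφinj (by simpa using h))
  have hCBrank : ((C k).map (algebraMap R (FractionRing R))
      * (B k).map (algebraMap R (FractionRing R))).rank = m (k + 1) := by
    rw [Matrix.rank_of_isUnit _
      ((Matrix.isUnit_iff_isUnit_det _).mpr (isUnit_iff_ne_zero.mpr hns')),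
      Fintype.card_fin]
  have h1 : ((C k).map (algebraMap R (FractionRing R))
      * (B k).map (algebraMap R (FractionRing R))).rank
      = ((C (k + 1)).map (algebraMap R (FractionRing R))).rank := by
    rw [hchain' k,
      rank_mul_of_injective _ _ (mulVecLin_injective_of_rank' _ (hB' (k + 1)))]
  have hm : m (k + 2) = m (k + 1) := by
    rw [← hC' (k + 1), ← h1, hCBrank]
  have hmapA : ∀ j : ℕ, (A ^ j).map (algebraMap R (FractionRing R))
      = (A.map (algebraMap R (FractionRing R))) ^ j := fun j => by
    simpa [RingHom.mapMatrix_apply] using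
      map_pow ((algebraMap R (FractionRing R)).mapMatrix) A j
  have hrank : ∀ j, (A ^ j).rank = m j := fun j => by
    rw [← Matrix.rank_map_fractionRing, hmapA j]
    exact rank_pow_eq m _ _ _ hA' hchain' hB' hC' j
  have hCB : (C k * B k).rank = m (k + 1) := by
    rw [← Matrix.rank_map_fractionRing,
      Matrix.map_mul (f := algebraMap R (FractionRing R))]
    exact hCBrank
  exact ⟨by rw [hrank, hrank, hm], by rw [hrank, hCB]⟩

/-- for a chain of full rank factorizations
A = B₀C₀, CᵢBᵢ = B_{i+1}C_{i+1} (indexed from 0, so that Bᵢ, Cᵢ here are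
the paper's B_{i+1}, C_{i+1}), if C_{l-1}·B_{l-1} is nonsingular (l ≥ 1,
this is the paper's C_l B_l), then
rank(A^{l+1}) = rank(A^l) = rank(C_{l-1}B_{l-1}). -/
theorem stmt_11 (D : Type*) [CommRing D] [IsDomain D] [IsPrincipalIdealRing D]
    (m : ℕ → ℕ)
    (A : Matrix (Fin (m 0)) (Fin (m 0)) (Polynomial D))
    (B : ∀ i : ℕ, Matrix (Fin (m i)) (Fin (m (i + 1))) (Polynomial D))
    (C : ∀ i : ℕ, Matrix (Fin (m (i + 1))) (Fin (m i)) (Polynomial D))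
    (hA : A = B 0 * C 0)
    (hchain : ∀ i, C i * B i = B (i + 1) * C (i + 1))
    (hBrank : ∀ i, (B i).rank = m (i + 1))
    (hCrank : ∀ i, (C i).rank = m (i + 1))
    (l : ℕ) (hl : 1 ≤ l)
    (hns : (C (l - 1) * B (l - 1)).det ≠ 0) :
    (A ^ (l + 1)).rank = (A ^ l).rank ∧
    (A ^ l).rank = (C (l - 1) * B (l - 1)).rank := by
  obtain ⟨k, rfl⟩ : ∃ k, l = k + 1 := ⟨l - 1, (Nat.succ_pred_eq_of_pos hl).symm⟩
  exact main_chain m A B C hA hchain hBrank hCrank k hns
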